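/- Let V be a vector space of dimension d ≥ 2 over a field of characteristic 0, and let Λ : V × V → V be a symmetric bilinear map such that for all u, v, w ∈ V the element Λ(u,v) ⊗ w + Λ(v,w) ⊗ u + Λ(w,u) ⊗ v of V ⊗ V is symmetric under the swap of tensor factors. Then there exists ξ ∈ V* with Λ(u,v) = ξ(u)·v + ξ(v)·u for all u, v (explicitly, ξ(u) = (1/(d+1))·tr(v ↦ Λ(u,v))). -/

import Mathlib

open scoped TensorProduct

/-- Let `V` have dimension `d ≥ 2` over a field of characteristic zero, and let
`Λ : V × V → V` be a symmetric bilinear map such that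
`Λ(u,v) ⊗ w + Λ(v,w) ⊗ u + Λ(w,u) ⊗ v` is symmetric under the swap of tensor factors for
all `u, v, w`.  Then `Λ(u,v) = ξ(u)·v + ξ(v)·u` for a linear functional `ξ`, explicitly
`ξ(u) = (1/(d+1))·tr(v ↦ Λ(u,v))`. -/
theorem symmetric_projective_difference_tensor (K : Type*) [Field K] [CharZero K]
    (V : Type*) [AddCommGroup V] [Module K V] [FiniteDimensional K V]
    (d : ℕ) (hd : 2 ≤ d) (hdim : Module.finrank K V = d)
    (Λ : V →ₗ[K] V →ₗ[K] V)
    (hΛsymm : ∀ u v : V, Λ u v = Λ v u)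
    (hΛ : ∀ u v w : V,
      Λ u v ⊗ₜ[K] w + Λ v w ⊗ₜ[K] u + Λ w u ⊗ₜ[K] v
        = w ⊗ₜ[K] Λ u v + u ⊗ₜ[K] Λ v w + v ⊗ₜ[K] Λ w u) :
    ∃ ξ : V →ₗ[K] K, (∀ u v : V, Λ u v = ξ u • v + ξ v • u) ∧
      ∀ u : V, ξ u = ((d : K) + 1)⁻¹ * LinearMap.trace K V (Λ u) := by
  classical
  have b : Module.Basis (Fin d) K V := Module.finBasisOfFinrankEq K V hdim
  set f : (V →ₗ[K] K) → (V ⊗[K] V →ₗ[K] V) :=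
    fun φ => TensorProduct.lift (((LinearMap.lsmul K V).comp φ).flip) with hf
  have hfapp : ∀ (φ : V →ₗ[K] K) (x y : V), f φ (x ⊗ₜ[K] y) = φ y • x := by
    intro φ x y; simp [hf]
  have tr_eq : ∀ g : V →ₗ[K] V, LinearMap.trace K V g = ∑ i, b.coord i (g (b i)) := by
    intro g
    rw [LinearMap.trace_eq_matrix_trace K b g, Matrix.trace]
    simp [Matrix.diag, LinearMap.toMatrix_apply, Module.Basis.coord_apply]
  have hd1 : ((d : K) + 1) ≠ 0 := by
    have : ((d + 1 : ℕ) : K) ≠ 0 := Nat.cast_ne_zero.mpr (Nat.succ_ne_zero d)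
    simpa using this
  have key : ∀ u v : V, ((d : K) + 1) • Λ u v
      = (LinearMap.trace K V (Λ v)) • u + (LinearMap.trace K V (Λ u)) • v := by
    intro u v
    have h2 : ∑ i : Fin d,
        (b.coord i (b i) • Λ u v + b.coord i u • Λ v (b i) + b.coord i v • Λ (b i) u)
        = ∑ i : Fin d,
        (b.coord i (Λ u v) • b i + b.coord i (Λ v (b i)) • u + b.coord i (Λ (b i) u) • v) := by
      refine Finset.sum_congr rfl fun i _ => ?_
      have h1 := congrArg (f (b.coord i)) (hΛ u v (b i))
      simpa [map_add, hfapp] using h1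
    have L1 : ∑ i : Fin d, b.coord i (b i) • Λ u v = (d : K) • Λ u v := by
      have h3 : ∀ i : Fin d, b.coord i (b i) = 1 := by
        intro i; simp [Module.Basis.coord_apply]
      simp [h3, Finset.sum_const, ← Nat.cast_smul_eq_nsmul K]
    have L2 : ∑ i : Fin d, b.coord i u • Λ v (b i) = Λ v u := by
      calc ∑ i : Fin d, b.coord i u • Λ v (b i)
          = Λ v (∑ i : Fin d, b.coord i u • b i) := by
            rw [map_sum]; simp [map_smul]
        _ = Λ v u := congrArg (Λ v) (by simpa [Module.Basis.coord_apply] using b.sum_repr u)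
    have L3 : ∑ i : Fin d, b.coord i v • Λ (b i) u = Λ u v := by
      calc ∑ i : Fin d, b.coord i v • Λ (b i) u
          = ∑ i : Fin d, b.coord i v • Λ u (b i) := by
            refine Finset.sum_congr rfl fun i _ => ?_
            rw [hΛsymm]
        _ = Λ u (∑ i : Fin d, b.coord i v • b i) := by
            rw [map_sum]; simp [map_smul]
        _ = Λ u v := congrArg (Λ u) (by simpa [Module.Basis.coord_apply] using b.sum_repr v)
    have R1 : ∑ i : Fin d, b.coord i (Λ u v) • b i = Λ u v := by
      simpa [Module.Basis.coord_apply] using b.sum_repr (Λ u v)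
    have R2 : ∑ i : Fin d, b.coord i (Λ v (b i)) • u = (LinearMap.trace K V (Λ v)) • u := by
      rw [← Finset.sum_smul, ← tr_eq]
    have R3 : ∑ i : Fin d, b.coord i (Λ (b i) u) • v = (LinearMap.trace K V (Λ u)) • v := by
      have h4 : ∀ i : Fin d, Λ (b i) u = Λ u (b i) := fun i => hΛsymm _ _
      simp only [h4]
      rw [← Finset.sum_smul, ← tr_eq]
    rw [Finset.sum_add_distrib, Finset.sum_add_distrib, Finset.sum_add_distrib,
      Finset.sum_add_distrib, L1, L2, L3, R1, R2, R3] at h2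
    have hvu : Λ v u = Λ u v := hΛsymm v u
    rw [hvu] at h2
    linear_combination (norm := module) h2
  refine ⟨((d : K) + 1)⁻¹ • ((LinearMap.trace K V).comp Λ), ?_, ?_⟩
  · intro u v
    have h := key u v
    have h2 : Λ u v = ((d : K) + 1)⁻¹ •
        ((LinearMap.trace K V (Λ v)) • u + (LinearMap.trace K V (Λ u)) • v) := by
      rw [← h, inv_smul_smul₀ hd1]
    rw [h2]
    simp only [LinearMap.smul_apply, LinearMap.coe_comp, Function.comp_apply, smul_add,
      smul_smul, smul_eq_mul]
    abel
  · intro u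
    simp [smul_eq_mul]
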